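/- Let d ≥ 1, let 𝒟 ⊆ ℝ^d be a convex set, let f_1,…,f_T : ℝ^d → ℝ be convex differentiable functions, let x_1,…,x_T ∈ 𝒟, set g_t = ∇f_t(x_t), let η > 0, G ≥ 0 and u ∈ 𝒟, and define s_t^η(x) = −η⟨x_t − x, g_t⟩ + η²G²‖x_t − x‖². Then Σ_{t=1}^T f_t(x_t) − Σ_{t=1}^T f_t(u) ≤ (1/η) Σ_{t=1}^T (s_t^η(x_t) − s_t^η(u)) + η G² Σ_{t=1}^T ‖x_t − u‖², where s_t^η(x_t) = 0. -/

import Mathlib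

open Filter Topology

lemma grad_subgradient {E : Type*} [NormedAddCommGroup E] [InnerProductSpace ℝ E] [CompleteSpace E]
    {f : E → ℝ} {g x u : E} (hconv : ConvexOn ℝ Set.univ f)
    (hg : HasGradientAt f g x) :
    f x - f u ≤ (inner ℝ (x - u) g : ℝ) := by
  -- line c t = x + t • (u - x)
  have hc : HasDerivAt (fun t : ℝ => x + t • (u - x)) (u - x) 0 := by
    simpa using ((hasDerivAt_id (0:ℝ)).smul_const (u - x)).const_add x
  have hh : HasDerivAt (fun t : ℝ => f (x + t • (u - x))) ((inner ℝ g (u - x) : ℝ)) 0 := by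
    have hg' : HasFDerivAt f ((InnerProductSpace.toDual ℝ E) g) (x + (0:ℝ) • (u - x)) := by
      simpa using hg.hasFDerivAt
    have := hg'.comp_hasDerivAt 0 hc
    exact this
  have hslope : Tendsto (slope (fun t : ℝ => f (x + t • (u - x))) 0) (𝓝[>] 0)
      (𝓝 ((inner ℝ g (u - x) : ℝ))) :=
    (hasDerivAt_iff_tendsto_slope.mp hh).mono_left
      (nhdsWithin_mono 0 (fun t ht => ne_of_gt ht))
  have hbound : ∀ᶠ t in 𝓝[>] (0:ℝ),
      slope (fun t : ℝ => f (x + t • (u - x))) 0 t ≤ f u - f x := by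
    filter_upwards [Ioc_mem_nhdsGT_of_mem (Set.left_mem_Ico.2 one_pos)] with t ht
    have ht0 : 0 < t := ht.1
    have key : f (x + t • (u - x)) ≤ (1 - t) * f x + t * f u := by
      have := hconv.2 (Set.mem_univ x) (Set.mem_univ u)
        (by linarith [ht.2] : (0:ℝ) ≤ 1 - t) ht0.le (by ring)
      have hpt : (1 - t) • x + t • u = x + t • (u - x) := by
        module
      rw [hpt] at this
      simpa [smul_eq_mul] using this
    rw [slope_def_field]
    simp only [sub_zero, zero_smul, add_zero]
    rw [div_le_iff₀ ht0]
    nlinarith [key]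
  have hle : (inner ℝ g (u - x) : ℝ) ≤ f u - f x :=
    le_of_tendsto hslope hbound
  have : (inner ℝ (x - u) g : ℝ) = -(inner ℝ g (u - x) : ℝ) := by
    rw [real_inner_comm]
    simp [inner_sub_left, inner_sub_right]
  linarith [hle, this.ge, this.le]

theorem regret_decomposition_strongly_convex_surrogate
    (d T : ℕ) (hd : 1 ≤ d)
    (𝒟 : Set (EuclideanSpace ℝ (Fin d))) (hconv : Convex ℝ 𝒟)
    (f : ℕ → EuclideanSpace ℝ (Fin d) → ℝ)
    (hfconv : ∀ t ∈ Finset.Icc 1 T, ConvexOn ℝ Set.univ (f t))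
    (x : ℕ → EuclideanSpace ℝ (Fin d)) (hx : ∀ t ∈ Finset.Icc 1 T, x t ∈ 𝒟)
    (g : ℕ → EuclideanSpace ℝ (Fin d))
    (hgrad : ∀ t ∈ Finset.Icc 1 T, HasGradientAt (f t) (g t) (x t))
    (η G : ℝ) (hη : 0 < η) (hG : 0 ≤ G)
    (u : EuclideanSpace ℝ (Fin d)) (hu : u ∈ 𝒟)
    (s : ℕ → EuclideanSpace ℝ (Fin d) → ℝ)
    (hs : ∀ t y, s t y = -η * (inner ℝ (x t - y) (g t) : ℝ) + η^2 * G^2 * ‖x t - y‖^2) :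
    (∑ t ∈ Finset.Icc 1 T, f t (x t)) - (∑ t ∈ Finset.Icc 1 T, f t u)
      ≤ (1 / η) * (∑ t ∈ Finset.Icc 1 T, (s t (x t) - s t u))
        + η * G^2 * ∑ t ∈ Finset.Icc 1 T, ‖x t - u‖^2 := by
  have key : ∀ t ∈ Finset.Icc 1 T,
      f t (x t) - f t u ≤ (inner ℝ (x t - u) (g t) : ℝ) := fun t ht =>
    grad_subgradient (hfconv t ht) (hgrad t ht)
  have hrhs : (1 / η) * (∑ t ∈ Finset.Icc 1 T, (s t (x t) - s t u))
        + η * G^2 * ∑ t ∈ Finset.Icc 1 T, ‖x t - u‖^2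
      = ∑ t ∈ Finset.Icc 1 T, (inner ℝ (x t - u) (g t) : ℝ) := by
    rw [Finset.mul_sum, Finset.mul_sum, ← Finset.sum_add_distrib]
    refine Finset.sum_congr rfl fun t ht => ?_
    rw [hs, hs]
    simp only [sub_self, inner_zero_left, norm_zero]
    field_simp
    ring
  rw [hrhs, ← Finset.sum_sub_distrib]
  exact Finset.sum_le_sum key
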